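/- arXiv:1703.01583 — 3 statements merged into one kernel-verified Lean document; each statement's English description precedes it below -/
import Mathlib

section
/- Let (E,ℒ) be a labeled graph satisfying the standing assumptions with ℰ the smallest normal accommodating set, and suppose (E,ℒ,ℰ) is disagreeable. Then every loop (α,A) with nonempty A ∈ ℰ has an exit. -/
/-- The `n`-fold concatenation (power) `w^n` of a finite word `w`. -/
def wpow {Λ : Type*} (w : List Λ) (n : ℕ) : List Λ := (List.replicate n w).flatten

/-- The finite word `x_{[1,n]}` formed by the first `n` letters of an infinite word `x`. -/
def wordPrefix {Λ : Type*} (x : ℕ → Λ) (n : ℕ) : List Λ := (List.range n).map x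

/-- A labeled graph `(E, ℒ)`: a directed graph with vertex set `V` and edge type `Edge`
(with range and source maps), together with a surjective labeling map `lbl` onto the
alphabet `Λ`. -/
structure LabeledGraph (V : Type*) (Λ : Type*) where
  Edge : Type*
  src : Edge → V
  rng : Edge → V
  lbl : Edge → Λ
  lbl_surjective : Function.Surjective lbl

namespace LabeledGraph

variable {V : Type*} {Λ : Type*}

/-- `G.PathLabel u w α` holds iff there is a finite path `λ` of length `≥ 1` in the graph
with source `u`, range `w` and label word `ℒ(λ) = α`. -/
inductive PathLabel (G : LabeledGraph V Λ) : V → V → List Λ → Prop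
  | single (e : G.Edge) : PathLabel G (G.src e) (G.rng e) [G.lbl e]
  | cons (e : G.Edge) {w : V} {α : List Λ} :
      PathLabel G (G.rng e) w α → PathLabel G (G.src e) w (G.lbl e :: α)

variable (G : LabeledGraph V Λ)

/-- `α ∈ ℒ*(E)`: `α` is the label of some path of length `≥ 1`. -/
def IsLabel (α : List Λ) : Prop := ∃ u w, G.PathLabel u w α

/-- The relative range `r(A, α)` of `α` with respect to `A`. -/
def rel (A : Set V) (α : List Λ) : Set V := {w | ∃ u ∈ A, G.PathLabel u w α}

/-- `r(α) = r(E⁰, α)`. -/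
def range' (α : List Λ) : Set V := G.rel Set.univ α

/-- `s(α)`: the set of sources of paths labeled `α`. -/
def srcSet (α : List Λ) : Set V := {u | ∃ w, G.PathLabel u w α}

/-- `ℒ(AEⁿ)`: labels of paths of length `n` with source in `A`. -/
def lblFrom (A : Set V) (n : ℕ) : Set (List Λ) :=
  {α | α.length = n ∧ ∃ u ∈ A, ∃ w, G.PathLabel u w α}

/-- `ℒ(AE^{≥1})`: labels of paths of length `≥ 1` with source in `A`. -/
def lblFromGe (A : Set V) : Set (List Λ) := {α | ∃ u ∈ A, ∃ w, G.PathLabel u w α}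

/-- `ℒ(EⁿA)`: labels of paths of length `n` with range in `A`. -/
def lblTo (A : Set V) (n : ℕ) : Set (List Λ) :=
  {α | α.length = n ∧ ∃ u, ∃ w ∈ A, G.PathLabel u w α}

/-- The generalized vertex `[v]_l`: the set of vertices `w` receiving at least one edge
such that `ℒ(E^k w) = ℒ(E^k v)` for all `1 ≤ k ≤ l`. -/
def gv (v : V) (l : ℕ) : Set V :=
  {w | (∃ e : G.Edge, G.rng e = w) ∧
    ∀ k : ℕ, 1 ≤ k → k ≤ l → G.lblTo {w} k = G.lblTo {v} k}

/-- Membership in `ℰ`, the smallest collection of subsets of `E⁰` containing all ranges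
`r(α)` and closed under relative ranges, finite intersections, finite unions and
relative complements (the smallest normal accommodating set). -/
inductive memE : Set V → Prop
  | empty : memE ∅
  | range (α : List Λ) : α ≠ [] → memE (G.range' α)
  | relRange {A : Set V} (α : List Λ) : α ≠ [] → memE A → memE (G.rel A α)
  | inter {A C : Set V} : memE A → memE C → memE (A ∩ C)
  | union {A C : Set V} : memE A → memE C → memE (A ∪ C)
  | diff {A C : Set V} : memE A → memE C → memE (A \ C)

/-- The standing assumptions on the labeled space `(E, ℒ, ℰ)`: the graph has no sinks and
the labeled space is weakly left-resolving, set-finite and receiver set-finite. -/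
structure Standing : Prop where
  no_sinks : ∀ u : V, ∃ e : G.Edge, G.src e = u
  weakly_left_resolving : ∀ A C : Set V, G.memE A → G.memE C →
    ∀ α : List Λ, α ≠ [] → G.rel (A ∩ C) α = G.rel A α ∩ G.rel C α
  set_finite : ∀ A : Set V, G.memE A → ∀ k : ℕ, 1 ≤ k → (G.lblFrom A k).Finite
  receiver_set_finite : ∀ A : Set V, G.memE A → ∀ k : ℕ, 1 ≤ k → (G.lblTo A k).Finite

/-- `α` is agreeable for `[v]_l` (the condition only depends on `l`):
`α = βα' = α'γ` with `α', β, γ ∈ ℒ*(E)` and `|β| = |γ| ≤ l`. -/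
def Agreeable (l : ℕ) (α : List Λ) : Prop :=
  ∃ α' β γ : List Λ, G.IsLabel α' ∧ G.IsLabel β ∧ G.IsLabel γ ∧
    β.length = γ.length ∧ β.length ≤ l ∧ α = β ++ α' ∧ α = α' ++ γ

/-- `α` (a path with `s(α) ∩ [v]_l ≠ ∅`) is disagreeable for `[v]_l`. -/
def DisagreeableFor (v : V) (l : ℕ) (α : List Λ) : Prop :=
  (G.srcSet α ∩ G.gv v l).Nonempty ∧ ¬ G.Agreeable l α

/-- The generalized vertex `[v]_l` is disagreeable: there is `N ≥ 1` such that for every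
`n > N` there is a path in `ℒ(E^{≥n})` which is disagreeable for `[v]_l`. -/
def DisagreeableGV (v : V) (l : ℕ) : Prop :=
  ∃ N : ℕ, 1 ≤ N ∧ ∀ n : ℕ, N < n →
    ∃ α : List Λ, n ≤ α.length ∧ G.DisagreeableFor v l α

/-- The labeled space `(E, ℒ, ℰ)` is disagreeable. -/
def Disagreeable : Prop :=
  ∀ v : V, ∃ L : ℕ, 1 ≤ L ∧ ∀ l : ℕ, L ≤ l → G.DisagreeableGV v l

/-- `(α, A)` is a loop: `A ∈ ℰ` is nonempty, `α ∈ ℒ*(E)` and `A ⊆ r(A, α)`. -/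
def IsLoop (α : List Λ) (A : Set V) : Prop :=
  α ≠ [] ∧ G.memE A ∧ A.Nonempty ∧ A ⊆ G.rel A α

/-- The loop `(α, A)` has an exit: either (i) there is `β ∈ ℒ(AE^{|α|})` with `β ≠ α` and
`r(A, β) ≠ ∅`, or (ii) `A ⊊ r(A, α)`. -/
def HasExit (α : List Λ) (A : Set V) : Prop :=
  (∃ β : List Λ, β ∈ G.lblFrom A α.length ∧ β ≠ α ∧ (G.rel A β).Nonempty) ∨
    A ⊂ G.rel A α

/-- `A ∈ ℰ` is minimal: `A ≠ ∅` and `A ∩ C ∈ {A, ∅}` for every `C ∈ ℰ`. -/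
def MinimalSet (A : Set V) : Prop :=
  G.memE A ∧ A.Nonempty ∧ ∀ C : Set V, G.memE C → A ∩ C = A ∨ A ∩ C = ∅

/-- A set `Bset ⊆ E⁰` connects to a loop: there are a loop `(α, A)` and finitely many
paths `δ₁, …, δ_m ∈ ℒ*(E)`, none of which is an initial path of another, with
`A ⊆ ∪ᵢ r(Bset, δᵢ)`. -/
def ConnectsToLoop (Bset : Set V) : Prop :=
  ∃ (α : List Λ) (A : Set V), G.IsLoop α A ∧
    ∃ (m : ℕ) (δ : Fin m → List Λ), (∀ i, G.IsLabel (δ i)) ∧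
      (∀ i j, i ≠ j → ¬ (δ i <+: δ j)) ∧ A ⊆ ⋃ i, G.rel Bset (δ i)

/-- Every vertex connects to a loop: every generalized vertex `[v]_l` connects to a loop. -/
def EveryVertexConnectsToLoop : Prop :=
  ∀ (v : V) (l : ℕ), 1 ≤ l → (∃ e : G.Edge, G.rng e = v) →
    G.ConnectsToLoop (G.gv v l)

/-- The labeled space `(E, ℒ, ℰ)` is strongly cofinal. -/
def StronglyCofinal : Prop :=
  ∀ x : ℕ → Λ, (∀ n : ℕ, 1 ≤ n → G.IsLabel (wordPrefix x n)) →
    ∀ (v : V) (l : ℕ), (∃ e : G.Edge, G.rng e = v) → 1 ≤ l →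
      ∃ N : ℕ, 1 ≤ N ∧ ∃ (m : ℕ) (lam : Fin m → List Λ),
        (∀ i, G.IsLabel (lam i)) ∧
        G.range' (wordPrefix x N) ⊆ ⋃ i, G.rel (G.gv v l) (lam i)

/-- A subset `H ⊆ ℰ` is hereditary: it is closed under finite unions, relative ranges,
and subsets belonging to `ℰ`. -/
def IsHereditary (H : Set (Set V)) : Prop :=
  (∀ A ∈ H, G.memE A) ∧
  (∀ A ∈ H, ∀ C ∈ H, A ∪ C ∈ H) ∧
  (∀ A ∈ H, ∀ β : List Λ, G.IsLabel β → G.rel A β ∈ H) ∧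
  (∀ A ∈ H, ∀ C : Set V, G.memE C → C ⊆ A → C ∈ H)

/-- A subset `H ⊆ ℰ` is saturated: every `A ∈ ℰ` with `r(A, β) ∈ H` for all
`β ∈ ℒ*(E)` belongs to `H`. -/
def IsSaturated (H : Set (Set V)) : Prop :=
  ∀ A : Set V, G.memE A → (∀ β : List Λ, G.IsLabel β → G.rel A β ∈ H) → A ∈ H

end LabeledGraph


section Aux

lemma wpow_succ {Λ : Type*} (w : List Λ) (n : ℕ) : wpow w (n + 1) = w ++ wpow w n := by
  simp [wpow, List.replicate_succ]

lemma wpow_one {Λ : Type*} (w : List Λ) : wpow w 1 = w := by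
  simp [wpow]

lemma wpow_getElem {Λ : Type*} (α : List Λ) (h0 : 0 < α.length) (m j : ℕ)
    (hj : j < (wpow α m).length) :
    (wpow α m)[j] = α[j % α.length]'(Nat.mod_lt j h0) := by
  induction m generalizing j with
  | zero => simp [wpow] at hj
  | succ m ih =>
    rw [wpow_succ] at hj
    rw [List.getElem_of_eq (wpow_succ α m) ‹j < (wpow α (m+1)).length›]
    by_cases h : j < α.length
    · rw [List.getElem_append_left h]
      congr 1
      exact (Nat.mod_eq_of_lt h).symm
    · push_neg at h
      have hj' : j - α.length < (wpow α m).length := by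
        simp only [List.length_append] at hj; omega
      rw [List.getElem_append_right h, ih (j - α.length) hj']
      congr 1
      conv_rhs => rw [← Nat.sub_add_cancel h, Nat.add_mod_right]

namespace LabeledGraph

variable {V : Type*} {Λ : Type*} (G : LabeledGraph V Λ)

lemma PathLabel.ne_nil' {u w : V} {β : List Λ} (h : G.PathLabel u w β) : β ≠ [] := by
  cases h <;> simp

lemma PathLabel.append' {u w w' : V} {β γ : List Λ} (h : G.PathLabel u w β) :
    G.PathLabel w w' γ → G.PathLabel u w' (β ++ γ) := by
  induction h with
  | single e => intro h'; exact PathLabel.cons e h'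
  | cons e _ ih => intro h'; exact PathLabel.cons e (ih h')

lemma PathLabel.split' {u w : V} {δ : List Λ} (h : G.PathLabel u w δ) :
    ∀ k, 1 ≤ k → k < δ.length →
      ∃ w', G.PathLabel u w' (δ.take k) ∧ G.PathLabel w' w (δ.drop k) := by
  induction h with
  | single e => intro k h1 h2; simp at h2; omega
  | @cons e w' αl p ih =>
    intro k h1 h2
    match k, h1 with
    | 1, _ => exact ⟨_, PathLabel.single e, p⟩
    | (k+2), _ =>
      obtain ⟨w'', hw1, hw2⟩ := ih (k+1) (by omega) (by simp at h2 ⊢; omega)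
      exact ⟨w'', PathLabel.cons e hw1, hw2⟩

lemma exists_path_of_length (hns : ∀ u : V, ∃ e : G.Edge, G.src e = u) :
    ∀ n : ℕ, 1 ≤ n → ∀ w : V, ∃ w' γ, γ.length = n ∧ G.PathLabel w w' γ := by
  intro n
  induction n with
  | zero => omega
  | succ n ih =>
    intro _ w
    obtain ⟨e, he⟩ := hns w
    rcases Nat.eq_zero_or_pos n with rfl | hn
    · subst he; exact ⟨G.rng e, [G.lbl e], rfl, PathLabel.single e⟩
    · obtain ⟨w', γ, hl, hp⟩ := ih hn (G.rng e)
      subst he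
      exact ⟨w', G.lbl e :: γ, by simp [hl], PathLabel.cons e hp⟩

/-- The boolean-combination description of `ℰ`. -/
inductive memB : Set V → Prop
  | empty : memB ∅
  | range (β : List Λ) : β ≠ [] → memB (G.range' β)
  | inter {A C : Set V} : memB A → memB C → memB (A ∩ C)
  | union {A C : Set V} : memB A → memB C → memB (A ∪ C)
  | diff {A C : Set V} : memB A → memB C → memB (A \ C)

lemma memB_memE {A : Set V} (h : G.memB A) : G.memE A := by
  induction h with
  | empty => exact memE.empty
  | range β hβ => exact memE.range β hβ
  | inter _ _ h1 h2 => exact memE.inter h1 h2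
  | union _ _ h1 h2 => exact memE.union h1 h2
  | diff _ _ h1 h2 => exact memE.diff h1 h2

lemma rel_empty' (β : List Λ) : G.rel ∅ β = ∅ := by
  ext w; simp [rel]

lemma rel_union' (A C : Set V) (β : List Λ) :
    G.rel (A ∪ C) β = G.rel A β ∪ G.rel C β := by
  ext w
  constructor
  · rintro ⟨u, (h | h), hp⟩
    exacts [Or.inl ⟨u, h, hp⟩, Or.inr ⟨u, h, hp⟩]
  · rintro (⟨u, h, hp⟩ | ⟨u, h, hp⟩)
    exacts [⟨u, Or.inl h, hp⟩, ⟨u, Or.inr h, hp⟩]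

lemma rel_range'' (β γ : List Λ) (hβ : β ≠ []) (hγ : γ ≠ []) :
    G.rel (G.range' β) γ = G.range' (β ++ γ) := by
  ext w
  constructor
  · rintro ⟨u, ⟨u0, -, hp0⟩, hp⟩
    exact ⟨u0, trivial, PathLabel.append' G hp0 hp⟩
  · rintro ⟨u0, -, hp⟩
    obtain ⟨u, h1, h2⟩ := PathLabel.split' G hp β.length
      (by have := List.length_pos_iff.mpr hβ; omega)
      (by have := List.length_pos_iff.mpr hγ; simp; omega)
    rw [List.take_left] at h1
    rw [List.drop_left] at h2
    exact ⟨u, ⟨u0, trivial, h1⟩, h2⟩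

lemma rel_diff' (hS : G.Standing) {A C : Set V} (hA : G.memE A) (hC : G.memE C)
    (β : List Λ) (hβ : β ≠ []) : G.rel (A \ C) β = G.rel A β \ G.rel C β := by
  apply Set.eq_of_subset_of_subset
  · intro w hw
    refine ⟨?_, ?_⟩
    · obtain ⟨u, hu, hp⟩ := hw; exact ⟨u, hu.1, hp⟩
    · intro hwC
      have h1 : w ∈ G.rel ((A \ C) ∩ C) β := by
        rw [hS.weakly_left_resolving _ _ (memE.diff hA hC) hC β hβ]
        exact ⟨hw, hwC⟩
      rw [Set.diff_inter_self, G.rel_empty'] at h1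
      exact h1
  · rintro w ⟨⟨u, hu, hp⟩, hnc⟩
    exact ⟨u, ⟨hu, fun huC => hnc ⟨u, huC, hp⟩⟩, hp⟩

lemma memB_rel (hS : G.Standing) {A : Set V} (h : G.memB A) (β : List Λ) (hβ : β ≠ []) :
    G.memB (G.rel A β) := by
  induction h with
  | empty => rw [G.rel_empty']; exact memB.empty
  | range γ hγ =>
    rw [G.rel_range'' γ β hγ hβ]
    exact memB.range _ (by simp [hγ])
  | inter hA hC ihA ihC =>
    rw [hS.weakly_left_resolving _ _ (G.memB_memE hA) (G.memB_memE hC) β hβ]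
    exact memB.inter ihA ihC
  | union hA hC ihA ihC =>
    rw [G.rel_union']
    exact memB.union ihA ihC
  | diff hA hC ihA ihC =>
    rw [G.rel_diff' hS (G.memB_memE hA) (G.memB_memE hC) β hβ]
    exact memB.diff ihA ihC

lemma memE_memB (hS : G.Standing) {A : Set V} (h : G.memE A) : G.memB A := by
  induction h with
  | empty => exact memB.empty
  | range β hβ => exact memB.range β hβ
  | relRange β hβ _ ih => exact G.memB_rel hS ih β hβ
  | inter _ _ h1 h2 => exact memB.inter h1 h2
  | union _ _ h1 h2 => exact memB.union h1 h2
  | diff _ _ h1 h2 => exact memB.diff h1 h2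

lemma memB_stable {A : Set V} (h : G.memB A) (v : V) :
    ∃ l₀ : ℕ, ∀ l, l₀ ≤ l → ∀ w ∈ G.gv v l, (w ∈ A ↔ v ∈ A) := by
  induction h with
  | empty => exact ⟨0, by simp⟩
  | range β hβ =>
    refine ⟨β.length, fun l hl w hw => ?_⟩
    have hlen : 1 ≤ β.length := List.length_pos_iff.mpr hβ
    have hkey := hw.2 β.length hlen hl
    constructor
    · rintro ⟨u, -, hp⟩
      have hmem : β ∈ G.lblTo {w} β.length := ⟨rfl, u, w, rfl, hp⟩
      rw [hkey] at hmem
      obtain ⟨-, u', w', hw', hp'⟩ := hmem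
      exact ⟨u', trivial, hw' ▸ hp'⟩
    · rintro ⟨u, -, hp⟩
      have hmem : β ∈ G.lblTo {v} β.length := ⟨rfl, u, v, rfl, hp⟩
      rw [← hkey] at hmem
      obtain ⟨-, u', w', hw', hp'⟩ := hmem
      exact ⟨u', trivial, hw' ▸ hp'⟩
  | inter _ _ ihA ihC =>
    obtain ⟨lA, hA'⟩ := ihA
    obtain ⟨lC, hC'⟩ := ihC
    refine ⟨max lA lC, fun l hl w hw => ?_⟩
    have h1 := hA' l (le_trans (le_max_left _ _) hl) w hw
    have h2 := hC' l (le_trans (le_max_right _ _) hl) w hw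
    simp [Set.mem_inter_iff, h1, h2]
  | union _ _ ihA ihC =>
    obtain ⟨lA, hA'⟩ := ihA
    obtain ⟨lC, hC'⟩ := ihC
    refine ⟨max lA lC, fun l hl w hw => ?_⟩
    have h1 := hA' l (le_trans (le_max_left _ _) hl) w hw
    have h2 := hC' l (le_trans (le_max_right _ _) hl) w hw
    simp [Set.mem_union, h1, h2]
  | diff _ _ ihA ihC =>
    obtain ⟨lA, hA'⟩ := ihA
    obtain ⟨lC, hC'⟩ := ihC
    refine ⟨max lA lC, fun l hl w hw => ?_⟩
    have h1 := hA' l (le_trans (le_max_left _ _) hl) w hw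
    have h2 := hC' l (le_trans (le_max_right _ _) hl) w hw
    simp [Set.mem_diff, h1, h2]

end LabeledGraph

lemma prefix_wpow_drop {Λ : Type*} (α δ : List Λ) (m : ℕ) (h0 : 0 < α.length)
    (hpre : δ <+: wpow α m) (hlen : α.length ≤ δ.length) :
    δ.drop α.length = δ.take (δ.length - α.length) := by
  have hd : ∀ j (hj : j < δ.length), δ[j] = α[j % α.length]'(Nat.mod_lt j h0) := by
    intro j hj
    rw [hpre.getElem hj]
    exact wpow_getElem α h0 m j (by
      have := hpre.length_le
      omega)
  apply List.ext_getElem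
  · rw [List.length_drop, List.length_take]; omega
  · intro i h1 h2
    rw [List.length_drop] at h1
    rw [List.getElem_drop, List.getElem_take, hd (α.length + i) (by omega), hd i (by omega)]
    congr 1
    rw [Nat.add_comm, Nat.add_mod_right]

lemma prefix_wpow_take {Λ : Type*} (α δ : List Λ) (m : ℕ) (h0 : 0 < α.length)
    (hpre : δ <+: wpow α m) (hlen : α.length ≤ δ.length) :
    δ.take α.length = α := by
  obtain ⟨t, ht⟩ := hpre
  have hm : m ≠ 0 := by
    rintro rfl
    have h2 : δ.length + t.length = 0 := by
      have h3 := congrArg List.length ht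
      simpa [wpow] using h3
    omega
  obtain ⟨m', rfl⟩ := Nat.exists_eq_succ_of_ne_zero hm
  have h1 : δ.take α.length = (δ ++ t).take α.length :=
    (List.take_append_of_le_length hlen).symm
  rw [h1, ht, wpow_succ, List.take_left]


/-- If the labeled space `(E, ℒ, ℰ)` satisfies the standing assumptions and is
disagreeable, then every loop `(α, A)` (with nonempty `A ∈ ℰ`) has an exit. -/
theorem stmt_5 {V : Type*} {Λ : Type*} [Countable V] [Countable Λ]
    (G : LabeledGraph V Λ) [Countable G.Edge] (hS : G.Standing)
    (hd : G.Disagreeable) (α : List Λ) (A : Set V) (hloop : G.IsLoop α A) :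
    G.HasExit α A := by
  obtain ⟨hαne, hAE, hAne, hAsub⟩ := hloop
  by_cases hc1 : ∀ β ∈ G.lblFrom A α.length, β = α
  · by_cases hc2 : G.rel A α ⊆ A
    · exfalso
      have hAeq : G.rel A α = A := Set.Subset.antisymm hc2 hAsub
      obtain ⟨v, hv⟩ := hAne
      have hα0 : 0 < α.length := List.length_pos_iff.mpr hαne
      have hαlabel : G.IsLabel α := by
        obtain ⟨u, hu, hp⟩ := hAsub hv
        exact ⟨u, v, hp⟩
      -- every label of a path with source in A is a prefix of a power of α
      have hclaim : ∀ n : ℕ, ∀ β : List Λ, β.length ≤ n → ∀ u ∈ A, ∀ w : V,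
          G.PathLabel u w β → ∃ m, β <+: wpow α m := by
        intro n
        induction n with
        | zero =>
          intro β hβ u hu w hp
          exact absurd (List.eq_nil_of_length_eq_zero (by omega))
            (LabeledGraph.PathLabel.ne_nil' G hp)
        | succ n ih =>
          intro β hβlen u hu w hp
          have hβ0 : 0 < β.length :=
            List.length_pos_iff.mpr (LabeledGraph.PathLabel.ne_nil' G hp)
          rcases le_or_gt β.length α.length with hle | hgt
          · rcases eq_or_lt_of_le hle with heq | hlt
            · have hβα : β = α := hc1 β ⟨heq, u, hu, w, hp⟩
              exact ⟨1, by rw [wpow_one, hβα]⟩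
            · obtain ⟨w', γ, hγlen, hpγ⟩ :=
                LabeledGraph.exists_path_of_length G hS.no_sinks
                  (α.length - β.length) (by omega) w
              have hfull : G.PathLabel u w' (β ++ γ) :=
                LabeledGraph.PathLabel.append' G hp hpγ
              have hβγ : β ++ γ = α :=
                hc1 _ ⟨by rw [List.length_append, hγlen]; omega, u, hu, w', hfull⟩
              exact ⟨1, by rw [wpow_one]; exact ⟨γ, hβγ⟩⟩
          · obtain ⟨w', h1', h2'⟩ :=
              LabeledGraph.PathLabel.split' G hp α.length (by omega) hgt
            have htake : β.take α.length = α :=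
              hc1 _ ⟨by rw [List.length_take]; omega, u, hu, w', h1'⟩
            have hw' : w' ∈ A := by
              rw [← hAeq]
              exact ⟨u, hu, htake ▸ h1'⟩
            obtain ⟨m, hmpre⟩ := ih (β.drop α.length)
              (by rw [List.length_drop]; omega) w' hw' w h2'
            refine ⟨m + 1, ?_⟩
            obtain ⟨t, ht⟩ := hmpre
            refine ⟨t, ?_⟩
            rw [wpow_succ]
            conv_lhs => rw [← List.take_append_drop α.length β]
            rw [htake, List.append_assoc, ht]
      -- now use disagreeability at a vertex of A
      obtain ⟨L, hL1, hLd⟩ := hd v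
      obtain ⟨l₀, hstab⟩ := LabeledGraph.memB_stable G (LabeledGraph.memE_memB G hS hAE) v
      set l : ℕ := max L (max l₀ α.length) with hldef
      have hgv := hLd l (le_max_left _ _)
      obtain ⟨N, hN1, hNd⟩ := hgv
      obtain ⟨δ, hδlen, hdisag⟩ := hNd (N + l + 1) (by omega)
      obtain ⟨⟨w₀, hw₀src, hw₀gv⟩, hnag⟩ := hdisag
      obtain ⟨w₁, hp⟩ := hw₀src
      have hαl : α.length ≤ l := le_trans (le_max_right _ _) (le_max_right _ _)
      have hl₀l : l₀ ≤ l := le_trans (le_max_left _ _) (le_max_right _ _)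
      have hw₀A : w₀ ∈ A := (hstab l hl₀l w₀ hw₀gv).mpr hv
      obtain ⟨m, hpre⟩ := hclaim δ.length δ le_rfl w₀ hw₀A w₁ hp
      have hδα : α.length < δ.length := by omega
      apply hnag
      obtain ⟨w₂, hs1, hs2⟩ :=
        LabeledGraph.PathLabel.split' G hp (δ.length - α.length) (by omega) (by omega)
      refine ⟨δ.take (δ.length - α.length), α, δ.drop (δ.length - α.length),
        ⟨w₀, w₂, hs1⟩, hαlabel, ⟨w₂, w₁, hs2⟩, ?_, hαl, ?_, ?_⟩
      · rw [List.length_drop]; omega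
      · conv_lhs => rw [← List.take_append_drop α.length δ]
        rw [prefix_wpow_take α δ m hα0 hpre hδα.le,
          prefix_wpow_drop α δ m hα0 hpre hδα.le]
      · exact (List.take_append_drop _ δ).symm
    · exact Or.inr (lt_of_le_not_ge hAsub hc2)
  · push_neg at hc1
    obtain ⟨β, hβ, hne⟩ := hc1
    obtain ⟨hlen, u, hu, w, hp⟩ := hβ
    exact Or.inl ⟨β, ⟨hlen, u, hu, w, hp⟩, hne, w, u, hu, hp⟩
end Aux
end

section
/- Let (E,ℒ) be a labeled graph satisfying the standing assumptions with ℰ the smallest normal accommodating set, and let {s_a, p_A} be a representation of (E,ℒ,ℰ) in a C*-algebra such that p_B ≠ 0 for every nonempty B ∈ ℰ. If (α,A) is a loop with an exit, then p_A is an infinite projection. -/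
namespace LabeledGraph

variable {V : Type*} {Λ : Type*}

/-- A representation of the labeled space `(E, ℒ, ℰ)` in a C*-algebra `B`: a family of
projections `p A` (for `A ∈ ℰ`) and partial isometries `s a` (for letters `a`)
satisfying the defining relations (i)–(iv). -/
structure Representation (G : LabeledGraph V Λ) (B : Type*)
    [NonUnitalCStarAlgebra B] where
  p : Set V → B
  s : Λ → B
  p_selfAdjoint : ∀ A : Set V, G.memE A → IsSelfAdjoint (p A)
  p_idem : ∀ A : Set V, G.memE A → p A * p A = p A
  p_empty : p ∅ = 0
  p_inter : ∀ A C : Set V, G.memE A → G.memE C → p (A ∩ C) = p A * p C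
  p_union : ∀ A C : Set V, G.memE A → G.memE C →
    p (A ∪ C) = p A + p C - p (A ∩ C)
  p_mul_s : ∀ A : Set V, G.memE A → ∀ a : Λ, p A * s a = s a * p (G.rel A [a])
  star_s_mul_s : ∀ a : Λ, star (s a) * s a = p (G.range' [a])
  star_s_mul_s_orth : ∀ a b : Λ, a ≠ b → star (s a) * s b = 0
  cuntz_krieger : ∀ A : Set V, G.memE A → ∀ F : Finset Λ,
    (F : Set Λ) = {a : Λ | [a] ∈ G.lblFrom A 1} →
    p A = ∑ a ∈ F, s a * p (G.rel A [a]) * star (s a)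

/-- `s_α = s_{a₁} ⋯ s_{aₙ}` for a word `α = a₁ ⋯ aₙ` (defined as `0` on the empty word). -/
def Representation.sWord {G : LabeledGraph V Λ} {B : Type*} [NonUnitalCStarAlgebra B]
    (ρ : Representation G B) : List Λ → B
  | [] => 0
  | [a] => ρ.s a
  | a :: b :: α => ρ.s a * Representation.sWord ρ (b :: α)

/-- A gauge action for a representation: a point-norm continuous action of the circle
group `𝕋` by *-automorphisms fixing the projections `p A` and multiplying each `s a`
by the corresponding scalar. -/
structure Representation.GaugeAction {G : LabeledGraph V Λ} {B : Type*} [NonUnitalCStarAlgebra B]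
    (ρ : Representation G B) where
  γ : Circle → B ≃⋆ₐ[ℂ] B
  γ_mul : ∀ z w : Circle, γ (z * w) = (γ w).trans (γ z)
  γ_continuous : ∀ b : B, Continuous fun z : Circle => γ z b
  γ_s : ∀ (z : Circle) (a : Λ), γ z (ρ.s a) = (z : ℂ) • ρ.s a
  γ_p : ∀ (z : Circle) (A : Set V), G.memE A → γ z (ρ.p A) = ρ.p A

end LabeledGraph

/-- A projection in a C*-algebra. -/
def IsProjectionElem {B : Type*} [NonUnitalCStarAlgebra B] (q : B) : Prop :=
  IsSelfAdjoint q ∧ q * q = q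

/-- Murray–von Neumann equivalence of projections: `q = w* w` and `r = w w*` for some `w`. -/
def MvNEquiv {B : Type*} [NonUnitalCStarAlgebra B] (q r : B) : Prop :=
  ∃ w : B, star w * w = q ∧ w * star w = r

/-- An infinite projection: a projection `q` such that `w* w = q`, `w w* ≤ q` and
`w w* ≠ q` for some `w`. -/
def IsInfiniteProjection {B : Type*} [NonUnitalCStarAlgebra B] [PartialOrder B]
    [StarOrderedRing B] (q : B) : Prop :=
  IsProjectionElem q ∧ ∃ w : B, star w * w = q ∧ w * star w ≤ q ∧ w * star w ≠ q

section Stmt6Aux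
set_option linter.unusedSectionVars false

open LabeledGraph

variable {V : Type*} {Λ : Type*} {G : LabeledGraph V Λ}

lemma aux_pathLabel_ne_nil {u w : V} {γ : List Λ} (h : G.PathLabel u w γ) : γ ≠ [] := by
  cases h <;> simp

lemma aux_pathLabel_single_iff {u w : V} {a : Λ} :
    G.PathLabel u w [a] ↔ ∃ e : G.Edge, G.src e = u ∧ G.rng e = w ∧ G.lbl e = a := by
  constructor
  · intro h
    cases h with
    | single e => exact ⟨e, rfl, rfl, rfl⟩
    | cons e h => exact absurd rfl (aux_pathLabel_ne_nil h)
  · rintro ⟨e, rfl, rfl, rfl⟩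
    exact LabeledGraph.PathLabel.single e

lemma aux_pathLabel_cons_iff {u w : V} {a : Λ} {σ : List Λ} (hσ : σ ≠ []) :
    G.PathLabel u w (a :: σ) ↔
      ∃ e : G.Edge, G.src e = u ∧ G.lbl e = a ∧ G.PathLabel (G.rng e) w σ := by
  constructor
  · intro h
    cases h with
    | single e => exact absurd rfl hσ
    | cons e h => exact ⟨e, rfl, rfl, h⟩
  · rintro ⟨e, rfl, rfl, h⟩
    exact LabeledGraph.PathLabel.cons e h

lemma aux_rel_mono {A A' : Set V} (h : A ⊆ A') (σ : List Λ) : G.rel A σ ⊆ G.rel A' σ := by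
  rintro w ⟨u, hu, hp⟩
  exact ⟨u, h hu, hp⟩

lemma aux_rel_subset_range' (A : Set V) (σ : List Λ) : G.rel A σ ⊆ G.range' σ :=
  aux_rel_mono (Set.subset_univ A) σ

lemma aux_rel_cons {A : Set V} {a : Λ} {σ : List Λ} (hσ : σ ≠ []) :
    G.rel A (a :: σ) = G.rel (G.rel A [a]) σ := by
  ext w
  constructor
  · rintro ⟨u, hu, hp⟩
    rw [aux_pathLabel_cons_iff hσ] at hp
    obtain ⟨e, he1, he2, he3⟩ := hp
    exact ⟨G.rng e, ⟨u, hu, aux_pathLabel_single_iff.2 ⟨e, he1, rfl, he2⟩⟩, he3⟩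
  · rintro ⟨v, ⟨u, hu, hp1⟩, hp2⟩
    obtain ⟨e, he1, he2, he3⟩ := aux_pathLabel_single_iff.1 hp1
    exact ⟨u, hu, (aux_pathLabel_cons_iff hσ).2 ⟨e, he1, he3, he2 ▸ hp2⟩⟩

lemma aux_range'_cons {a : Λ} {σ : List Λ} (hσ : σ ≠ []) :
    G.range' (a :: σ) = G.rel (G.range' [a]) σ :=
  aux_rel_cons hσ

lemma aux_lblFrom_cons {A : Set V} {a : Λ} {σ : List Λ} (hσ : σ ≠ [])
    (hmem : (a :: σ) ∈ G.lblFrom A (a :: σ).length) :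
    [a] ∈ G.lblFrom A 1 ∧ σ ∈ G.lblFrom (G.rel A [a]) σ.length := by
  obtain ⟨hlen, u, hu, w, hp⟩ := hmem
  rw [aux_pathLabel_cons_iff hσ] at hp
  obtain ⟨e, he1, he2, he3⟩ := hp
  have h1 : G.PathLabel u (G.rng e) [a] := aux_pathLabel_single_iff.2 ⟨e, he1, rfl, he2⟩
  exact ⟨⟨rfl, u, hu, G.rng e, h1⟩, ⟨rfl, G.rng e, ⟨u, hu, h1⟩, w, he3⟩⟩

variable {B : Type*} [NonUnitalCStarAlgebra B] [PartialOrder B] [StarOrderedRing B]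
  (ρ : G.Representation B)

lemma aux_sWord_cons (a : Λ) {σ : List Λ} (hσ : σ ≠ []) :
    ρ.sWord (a :: σ) = ρ.s a * ρ.sWord σ := by
  cases σ with
  | nil => exact absurd rfl hσ
  | cons b τ => rfl

lemma aux_p_mul_sWord {A : Set V} (hA : G.memE A) (σ : List Λ) :
    ρ.p A * ρ.sWord σ = ρ.sWord σ * ρ.p (G.rel A σ) := by
  induction σ generalizing A with
  | nil => simp [Representation.sWord]
  | cons a τ ih =>
    cases τ with
    | nil => exact ρ.p_mul_s A hA a
    | cons b τ' =>
      have hτ : (b :: τ' : List Λ) ≠ [] := by simp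
      rw [aux_sWord_cons ρ a hτ, ← mul_assoc, ρ.p_mul_s A hA a, mul_assoc,
        ih (LabeledGraph.memE.relRange [a] (by simp) hA), ← mul_assoc,
        ← aux_sWord_cons ρ a hτ, ← aux_rel_cons hτ]

lemma aux_star_sWord_mul_p {A : Set V} (hA : G.memE A) {σ : List Λ} (hσ : σ ≠ []) :
    star (ρ.sWord σ) * ρ.p A = ρ.p (G.rel A σ) * star (ρ.sWord σ) := by
  have h := congrArg star (aux_p_mul_sWord ρ hA σ)
  rw [star_mul, star_mul, (ρ.p_selfAdjoint A hA).star_eq,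
    (ρ.p_selfAdjoint _ (LabeledGraph.memE.relRange σ hσ hA)).star_eq] at h
  exact h

lemma aux_star_sWord_mul_sWord {σ : List Λ} (hσ : σ ≠ []) :
    star (ρ.sWord σ) * ρ.sWord σ = ρ.p (G.range' σ) := by
  induction σ with
  | nil => exact absurd rfl hσ
  | cons a τ ih =>
    cases τ with
    | nil => exact ρ.star_s_mul_s a
    | cons b τ' =>
      have hτ : (b :: τ' : List Λ) ≠ [] := by simp
      have hra : G.memE (G.range' [a]) := LabeledGraph.memE.range [a] (by simp)
      have hrel : G.memE (G.rel (G.range' [a]) (b :: τ')) :=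
        LabeledGraph.memE.relRange _ hτ hra
      have hrt : G.memE (G.range' (b :: τ')) := LabeledGraph.memE.range _ hτ
      calc star (ρ.sWord (a :: b :: τ')) * ρ.sWord (a :: b :: τ')
          = star (ρ.sWord (b :: τ')) * ((star (ρ.s a) * ρ.s a) * ρ.sWord (b :: τ')) := by
            rw [aux_sWord_cons ρ a hτ, star_mul]; noncomm_ring
        _ = star (ρ.sWord (b :: τ')) * (ρ.p (G.range' [a]) * ρ.sWord (b :: τ')) := by
            rw [ρ.star_s_mul_s a]
        _ = star (ρ.sWord (b :: τ')) * ρ.sWord (b :: τ') * ρ.p (G.rel (G.range' [a]) (b :: τ')) := by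
            rw [aux_p_mul_sWord ρ hra, mul_assoc]
        _ = ρ.p (G.range' (b :: τ')) * ρ.p (G.rel (G.range' [a]) (b :: τ')) := by
            rw [ih hτ]
        _ = ρ.p (G.range' (b :: τ') ∩ G.rel (G.range' [a]) (b :: τ')) := by
            rw [ρ.p_inter _ _ hrt hrel]
        _ = ρ.p (G.range' (a :: b :: τ')) := by
            rw [Set.inter_eq_right.2 (aux_rel_subset_range' _ _), aux_range'_cons hτ]

lemma aux_conj_nonneg {C : Set V} (hC : G.memE C) (x : B) : 0 ≤ x * ρ.p C * star x := by
  have h1 : x * ρ.p C * star x = (x * ρ.p C) * star (x * ρ.p C) := by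
    rw [star_mul, (ρ.p_selfAdjoint C hC).star_eq,
      show x * ρ.p C * (ρ.p C * star x) = x * (ρ.p C * ρ.p C) * star x by noncomm_ring,
      ρ.p_idem C hC]
  rw [h1]
  exact mul_star_self_nonneg _

lemma aux_p_le_p {A C : Set V} (hA : G.memE A) (hC : G.memE C) (h : A ⊆ C) :
    ρ.p A ≤ ρ.p C := by
  have h1 : ρ.p A * ρ.p C = ρ.p A := by
    rw [← ρ.p_inter A C hA hC, Set.inter_eq_left.2 h]
  have h2 : ρ.p C * ρ.p A = ρ.p A := by
    rw [← ρ.p_inter C A hC hA, Set.inter_eq_right.2 h]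
  have h3 : star (ρ.p C - ρ.p A) * (ρ.p C - ρ.p A) = ρ.p C - ρ.p A := by
    rw [star_sub, (ρ.p_selfAdjoint A hA).star_eq, (ρ.p_selfAdjoint C hC).star_eq,
      sub_mul, mul_sub, mul_sub, ρ.p_idem C hC, ρ.p_idem A hA, h1, h2]
    abel
  have h4 := star_mul_self_nonneg (ρ.p C - ρ.p A)
  rw [h3] at h4
  exact sub_nonneg.1 h4

lemma aux_ck1 (hS : G.Standing) {A : Set V} (hA : G.memE A) :
    ∃ F : Finset Λ, (∀ a, a ∈ F ↔ [a] ∈ G.lblFrom A 1) ∧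
      ρ.p A = ∑ a ∈ F, ρ.s a * ρ.p (G.rel A [a]) * star (ρ.s a) := by
  have hfin : {a : Λ | [a] ∈ G.lblFrom A 1}.Finite := by
    have h1 := hS.set_finite A hA 1 le_rfl
    have h2 : {a : Λ | [a] ∈ G.lblFrom A 1} = (fun a : Λ => [a]) ⁻¹' (G.lblFrom A 1) := rfl
    rw [h2]
    exact Set.Finite.preimage (Function.Injective.injOn fun a b h => by injection h) h1
  refine ⟨hfin.toFinset, fun a => by simp, ?_⟩
  exact ρ.cuntz_krieger A hA hfin.toFinset (by simp)

lemma aux_ckterm_le (hS : G.Standing) {A : Set V} {a : Λ} (hA : G.memE A)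
    (ha : [a] ∈ G.lblFrom A 1) :
    ρ.s a * ρ.p (G.rel A [a]) * star (ρ.s a) ≤ ρ.p A := by
  obtain ⟨F, hF, hsum⟩ := aux_ck1 ρ hS hA
  rw [hsum]
  exact Finset.single_le_sum
    (fun i _ => aux_conj_nonneg ρ (LabeledGraph.memE.relRange [i] (by simp) hA) (ρ.s i))
    ((hF a).2 ha)

lemma aux_conj_le (hS : G.Standing) {β : List Λ} :
    ∀ {A : Set V}, G.memE A → β ∈ G.lblFrom A β.length → β ≠ [] →
      ρ.sWord β * ρ.p (G.rel A β) * star (ρ.sWord β) ≤ ρ.p A := by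
  induction β with
  | nil => exact fun _ _ h => absurd rfl h
  | cons a σ ih =>
    intro A hA hmem _
    by_cases hσ : σ = []
    · subst hσ
      exact aux_ckterm_le ρ hS hA hmem
    · obtain ⟨ha1, hσmem⟩ := aux_lblFrom_cons hσ hmem
      have hArel : G.memE (G.rel A [a]) := LabeledGraph.memE.relRange [a] (by simp) hA
      have h1 := ih hArel hσmem hσ
      have h2 := star_right_conjugate_le_conjugate h1 (ρ.s a)
      have h3 := aux_ckterm_le ρ hS hA ha1
      calc ρ.sWord (a :: σ) * ρ.p (G.rel A (a :: σ)) * star (ρ.sWord (a :: σ))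
          = ρ.s a * (ρ.sWord σ * ρ.p (G.rel (G.rel A [a]) σ) * star (ρ.sWord σ)) * star (ρ.s a) := by
            rw [aux_sWord_cons ρ a hσ, aux_rel_cons hσ, star_mul]; noncomm_ring
        _ ≤ ρ.s a * ρ.p (G.rel A [a]) * star (ρ.s a) := h2
        _ ≤ ρ.p A := h3

lemma aux_conj_le_step (hS : G.Standing) {A : Set V} {a : Λ} {σ : List Λ} (hA : G.memE A)
    (hmem : (a :: σ) ∈ G.lblFrom A (a :: σ).length) :
    ρ.sWord (a :: σ) * ρ.p (G.rel A (a :: σ)) * star (ρ.sWord (a :: σ)) ≤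
      ρ.s a * ρ.p (G.rel A [a]) * star (ρ.s a) := by
  by_cases hσ : σ = []
  · subst hσ; exact le_of_eq rfl
  · obtain ⟨ha1, hσmem⟩ := aux_lblFrom_cons hσ hmem
    have hArel : G.memE (G.rel A [a]) := LabeledGraph.memE.relRange [a] (by simp) hA
    have h1 := aux_conj_le ρ hS hArel hσmem hσ
    have h2 := star_right_conjugate_le_conjugate h1 (ρ.s a)
    calc ρ.sWord (a :: σ) * ρ.p (G.rel A (a :: σ)) * star (ρ.sWord (a :: σ))
        = ρ.s a * (ρ.sWord σ * ρ.p (G.rel (G.rel A [a]) σ) * star (ρ.sWord σ)) * star (ρ.s a) := by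
          rw [aux_sWord_cons ρ a hσ, aux_rel_cons hσ, star_mul]; noncomm_ring
      _ ≤ ρ.s a * ρ.p (G.rel A [a]) * star (ρ.s a) := h2

lemma aux_conj_two_le (hS : G.Standing) {α : List Λ} :
    ∀ {β : List Λ} {A : Set V}, G.memE A → α ≠ β → α.length = β.length →
      α ∈ G.lblFrom A α.length → β ∈ G.lblFrom A β.length → α ≠ [] →
      ρ.sWord α * ρ.p (G.rel A α) * star (ρ.sWord α) +
        ρ.sWord β * ρ.p (G.rel A β) * star (ρ.sWord β) ≤ ρ.p A := by
  classical
  induction α with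
  | nil => exact fun {β A} _ _ _ _ _ h => absurd rfl h
  | cons a σ ih =>
    rintro β A hA hne hlen hα hβ -
    obtain ⟨b, τ, rfl⟩ : ∃ b τ, β = b :: τ := by
      cases β with
      | nil => simp at hlen
      | cons b τ => exact ⟨b, τ, rfl⟩
    have hlen' : σ.length = τ.length := by simpa using hlen
    by_cases hab : a = b
    · subst hab
      have hστ : σ ≠ τ := fun h => hne (by rw [h])
      have hσ : σ ≠ [] := by
        rintro rfl
        exact hστ (List.length_eq_zero_iff.1 (by simpa using hlen'.symm)).symm
      have hτ : τ ≠ [] := by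
        rintro rfl
        exact hσ (List.length_eq_zero_iff.1 (by simpa using hlen'))
      obtain ⟨ha1, hσmem⟩ := aux_lblFrom_cons hσ hα
      obtain ⟨-, hτmem⟩ := aux_lblFrom_cons hτ hβ
      have hArel : G.memE (G.rel A [a]) := LabeledGraph.memE.relRange [a] (by simp) hA
      have h1 := ih hArel hστ hlen' hσmem hτmem hσ
      have h2 := star_right_conjugate_le_conjugate h1 (ρ.s a)
      have h3 := aux_ckterm_le ρ hS hA ha1
      calc ρ.sWord (a :: σ) * ρ.p (G.rel A (a :: σ)) * star (ρ.sWord (a :: σ)) +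
            ρ.sWord (a :: τ) * ρ.p (G.rel A (a :: τ)) * star (ρ.sWord (a :: τ))
          = ρ.s a * (ρ.sWord σ * ρ.p (G.rel (G.rel A [a]) σ) * star (ρ.sWord σ) +
              ρ.sWord τ * ρ.p (G.rel (G.rel A [a]) τ) * star (ρ.sWord τ)) * star (ρ.s a) := by
            rw [aux_sWord_cons ρ a hσ, aux_sWord_cons ρ a hτ, aux_rel_cons hσ,
              aux_rel_cons hτ, star_mul, star_mul]
            noncomm_ring
        _ ≤ ρ.s a * ρ.p (G.rel A [a]) * star (ρ.s a) := h2
        _ ≤ ρ.p A := h3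
    · -- distinct first letters
      obtain ⟨F, hF, hsum⟩ := aux_ck1 ρ hS hA
      have ha1 : [a] ∈ G.lblFrom A 1 := by
        cases σ with
        | nil => exact hα
        | cons c σ' => exact (aux_lblFrom_cons (by simp) hα).1
      have hb1 : [b] ∈ G.lblFrom A 1 := by
        cases τ with
        | nil => exact hβ
        | cons c τ' => exact (aux_lblFrom_cons (by simp) hβ).1
      have hstepa := aux_conj_le_step ρ hS hA hα
      have hstepb := aux_conj_le_step ρ hS hA hβ
      set f : Λ → B := fun c => ρ.s c * ρ.p (G.rel A [c]) * star (ρ.s c) with hf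
      have hfnn : ∀ c, 0 ≤ f c := fun c =>
        aux_conj_nonneg ρ (LabeledGraph.memE.relRange [c] (by simp) hA) (ρ.s c)
      have haF : a ∈ F := (hF a).2 ha1
      have hbF : b ∈ F.erase a := Finset.mem_erase.2 ⟨fun h => hab h.symm, (hF b).2 hb1⟩
      have h4 : f b ≤ ∑ c ∈ F.erase a, f c :=
        Finset.single_le_sum (fun i _ => hfnn i) hbF
      have h5 : f a + f b ≤ ∑ c ∈ F, f c := by
        calc f a + f b ≤ f a + ∑ c ∈ F.erase a, f c := add_le_add_right h4 _
          _ = ∑ c ∈ F, f c := Finset.add_sum_erase F f haF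
      rw [hsum]
      exact le_trans (add_le_add hstepa hstepb) h5

lemma aux_conj_zero {C : Set V} {β : List Λ} (hC : G.memE C) (hβ : β ≠ [])
    (hsub : C ⊆ G.range' β)
    (h : ρ.sWord β * ρ.p C * star (ρ.sWord β) = 0) : ρ.p C = 0 := by
  have hr : G.memE (G.range' β) := LabeledGraph.memE.range β hβ
  have h2 : (star (ρ.sWord β) * ρ.sWord β) * ρ.p C * (star (ρ.sWord β) * ρ.sWord β) = 0 := by
    calc (star (ρ.sWord β) * ρ.sWord β) * ρ.p C * (star (ρ.sWord β) * ρ.sWord β)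
        = star (ρ.sWord β) * (ρ.sWord β * ρ.p C * star (ρ.sWord β)) * ρ.sWord β := by
          noncomm_ring
      _ = 0 := by rw [h]; simp
  rw [aux_star_sWord_mul_sWord ρ hβ] at h2
  have e1 : ρ.p (G.range' β) * ρ.p C = ρ.p C := by
    rw [← ρ.p_inter _ _ hr hC, Set.inter_eq_right.2 hsub]
  have e2 : ρ.p C * ρ.p (G.range' β) = ρ.p C := by
    rw [← ρ.p_inter _ _ hC hr, Set.inter_eq_left.2 hsub]
  rw [e1, e2] at h2
  exact h2

end Stmt6Aux
/-- If `{s_a, p_A}` is a representation of `(E, ℒ, ℰ)` in a C*-algebra with `p_B ≠ 0`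
for every nonempty `B ∈ ℰ`, and `(α, A)` is a loop with an exit, then `p_A` is an
infinite projection. -/
theorem stmt_6 {V : Type*} {Λ : Type*} [Countable V] [Countable Λ]
    (G : LabeledGraph V Λ) [Countable G.Edge] (hS : G.Standing)
    {B : Type*} [NonUnitalCStarAlgebra B] [PartialOrder B] [StarOrderedRing B]
    (ρ : G.Representation B)
    (hnz : ∀ C : Set V, G.memE C → C.Nonempty → ρ.p C ≠ 0)
    (α : List Λ) (A : Set V) (hloop : G.IsLoop α A) (hexit : G.HasExit α A) :
    IsInfiniteProjection (ρ.p A) := by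
  classical
  obtain ⟨hαne, hAE, hAne, hsub⟩ := hloop
  have hrelE : G.memE (G.rel A α) := LabeledGraph.memE.relRange α hαne hAE
  have hsubR : A ⊆ G.range' α := hsub.trans (aux_rel_subset_range' A α)
  obtain ⟨v, hv⟩ := hAne
  obtain ⟨u, hu, hp⟩ := hsub hv
  have hαmem : α ∈ G.lblFrom A α.length := ⟨rfl, u, hu, v, hp⟩
  set W := ρ.sWord α with hW
  have hproj : IsProjectionElem (ρ.p A) := ⟨ρ.p_selfAdjoint A hAE, ρ.p_idem A hAE⟩
  have hWW : star W * W = ρ.p (G.range' α) := aux_star_sWord_mul_sWord ρ hαne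
  have hww : star (W * ρ.p A) * (W * ρ.p A) = ρ.p A := by
    calc star (W * ρ.p A) * (W * ρ.p A) = ρ.p A * (star W * W) * ρ.p A := by
          rw [star_mul, (ρ.p_selfAdjoint A hAE).star_eq]; noncomm_ring
      _ = ρ.p A * ρ.p A := by
          rw [hWW, show ρ.p A * ρ.p (G.range' α) = ρ.p A by
            rw [← ρ.p_inter A _ hAE (LabeledGraph.memE.range α hαne), Set.inter_eq_left.2 hsubR]]
      _ = ρ.p A := ρ.p_idem A hAE
  have hwws : (W * ρ.p A) * star (W * ρ.p A) = W * ρ.p A * star W := by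
    rw [star_mul, (ρ.p_selfAdjoint A hAE).star_eq,
      show W * ρ.p A * (ρ.p A * star W) = W * (ρ.p A * ρ.p A) * star W by noncomm_ring,
      ρ.p_idem A hAE]
  have hle1 : ρ.p A ≤ ρ.p (G.rel A α) := aux_p_le_p ρ hAE hrelE hsub
  have hconj : W * ρ.p A * star W ≤ W * ρ.p (G.rel A α) * star W :=
    star_right_conjugate_le_conjugate hle1 W
  have hTle : W * ρ.p (G.rel A α) * star W ≤ ρ.p A := aux_conj_le ρ hS hAE hαmem hαne
  refine ⟨hproj, W * ρ.p A, hww, ?_, ?_⟩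
  · rw [hwws]; exact hconj.trans hTle
  · rw [hwws]
    intro heq
    rcases hexit with ⟨β, hβmem, hβα, hβnon⟩ | hss
    · -- case (i): an exit path with a different label
      have hβlen : β.length = α.length := hβmem.1
      have hβne : β ≠ [] := by
        rintro rfl
        exact hαne (List.length_eq_zero_iff.1 hβlen.symm)
      have hβmem' : β ∈ G.lblFrom A β.length := ⟨rfl, hβmem.2⟩
      have hβE : G.memE (G.rel A β) := LabeledGraph.memE.relRange β hβne hAE
      have h2 := aux_conj_two_le ρ hS hAE (Ne.symm hβα) hβlen.symm hαmem hβmem' hαne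
      have hT : ρ.p A ≤ W * ρ.p (G.rel A α) * star W := heq ▸ hconj
      have h3 : ρ.p A + ρ.sWord β * ρ.p (G.rel A β) * star (ρ.sWord β) ≤ ρ.p A :=
        le_trans (add_le_add_left hT _) h2
      have h4 : ρ.sWord β * ρ.p (G.rel A β) * star (ρ.sWord β) ≤ 0 :=
        (add_le_iff_nonpos_right _).1 h3
      have h5 : ρ.sWord β * ρ.p (G.rel A β) * star (ρ.sWord β) = 0 :=
        le_antisymm h4 (aux_conj_nonneg ρ hβE (ρ.sWord β))
      have h6 : ρ.p (G.rel A β) = 0 :=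
      aux_conj_zero ρ hβE hβne (aux_rel_subset_range' A β) h5
      exact hnz (G.rel A β) hβE hβnon h6
    · -- case (ii): A ⊊ r(A, α)
      set D := G.rel A α \ A with hD
      have hDE : G.memE D := LabeledGraph.memE.diff hrelE hAE
      have hDne : D.Nonempty := by
        obtain ⟨x, hx1, hx2⟩ := Set.exists_of_ssubset hss
        exact ⟨x, hx1, hx2⟩
      have hunion : A ∪ D = G.rel A α := Set.union_diff_cancel hss.1
      have hinter : A ∩ D = (∅ : Set V) := Set.inter_diff_self A _
      have hpd : ρ.p (G.rel A α) = ρ.p A + ρ.p D := by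
        rw [← hunion, ρ.p_union A D hAE hDE, hinter, ρ.p_empty, sub_zero]
      have hsplit : W * ρ.p (G.rel A α) * star W =
          W * ρ.p A * star W + W * ρ.p D * star W := by
        rw [hpd]; noncomm_ring
      rw [heq] at hsplit
      have h3 : ρ.p A + W * ρ.p D * star W ≤ ρ.p A := hsplit ▸ hTle
      have h4 : W * ρ.p D * star W ≤ 0 := (add_le_iff_nonpos_right _).1 h3
      have h5 : W * ρ.p D * star W = 0 := le_antisymm h4 (aux_conj_nonneg ρ hDE W)
      have hDsub : D ⊆ G.range' α := fun x hx => aux_rel_subset_range' A α hx.1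
      have h6 : ρ.p D = 0 := aux_conj_zero ρ hDE hαne hDsub h5
      exact hnz D hDE hDne h6
end

section
/- Let (E,ℒ) be a labeled graph satisfying the standing assumptions with ℰ the smallest normal accommodating set, and let A ∈ ℰ be minimal. Then for every β ∈ ℒ*(E) the following are equivalent: (i) A ⊆ r(A,β) (that is, (β,A) is a loop); (ii) r(A,β) ∩ A ≠ ∅; (iii) there is a path λ in E with s(λ) ∈ A, r(λ) ∈ A, and ℒ(λ) = β. -/
/-- For a minimal set `A ∈ ℰ` and `β ∈ ℒ*(E)`, the following are equivalent:
(i) `A ⊆ r(A, β)` (i.e. `(β, A)` is a loop); (ii) `r(A, β) ∩ A ≠ ∅`; (iii) there is a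
path `λ` with `s(λ) ∈ A`, `r(λ) ∈ A` and `ℒ(λ) = β`. -/
theorem stmt_11 {V : Type*} {Λ : Type*} [Countable V] [Countable Λ]
    (G : LabeledGraph V Λ) [Countable G.Edge] (hS : G.Standing)
    (A : Set V) (hA : G.MinimalSet A) (β : List Λ) (hβ : G.IsLabel β) :
    (A ⊆ G.rel A β ↔ (G.rel A β ∩ A).Nonempty) ∧
    (A ⊆ G.rel A β ↔ ∃ u ∈ A, ∃ w ∈ A, G.PathLabel u w β) := by
  obtain ⟨hAE, hAne, hmin⟩ := hA
  have hβne : β ≠ [] := by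
    obtain ⟨u, w, p⟩ := hβ
    cases p <;> simp
  have hrelE : G.memE (G.rel A β) := LabeledGraph.memE.relRange β hβne hAE
  have h12 : A ⊆ G.rel A β ↔ (G.rel A β ∩ A).Nonempty := by
    constructor
    · intro h
      obtain ⟨a, ha⟩ := hAne
      exact ⟨a, h ha, ha⟩
    · intro ⟨w, hw, hwA⟩
      rcases hmin (G.rel A β) hrelE with heq | heq
      · intro a ha; rw [← heq] at ha; exact ha.2
      · exact absurd (Set.eq_empty_iff_forall_notMem.mp heq w ⟨hwA, hw⟩) (by simp)
  refine ⟨h12, h12.trans ?_⟩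
  constructor
  · intro ⟨w, ⟨u, hu, p⟩, hwA⟩
    exact ⟨u, hu, w, hwA, p⟩
  · intro ⟨u, hu, w, hwA, p⟩
    exact ⟨w, ⟨u, hu, p⟩, hwA⟩
end
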